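/- arXiv:2601.20653 — 6 statements merged into one kernel-verified Lean document; each statement's English description precedes it below -/
import Mathlib

section
/- For every α ∈ {1,…,s}, σ, τ ≥ 0, every ordered vector W of ℝ^s, and every c ≥ 0, one has Φ_{α,σ,τ}(W + c·U) ≤ Φ_{α,σ,τ}(W) + c·U coordinatewise (sub-homogeneity of the one-step MJSRE map with respect to addition of a constant vector). -/
/-- The nondecreasing rearrangement operator `R` on vectors of ℝ^s. -/
noncomputable def sortVec {s : ℕ} (v : Fin s → ℝ) : Fin s → ℝ := v ∘ Tuple.sort v

/-- The all-ones vector `U`. -/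
def Uvec (s : ℕ) : Fin s → ℝ := fun _ => 1

/-- `L(α)`: coordinate `i` is `1` if `i ≤ α` and `0` otherwise (indices 0-based,
so `α : Fin s` represents the number of requested servers `α+1 ∈ {1,…,s}`). -/
def Lvec {s : ℕ} (α : Fin s) : Fin s → ℝ := fun i => if i ≤ α then 1 else 0

/-- `S(α, W)`: coordinate `i` is `max (W^α) (W^i)`. -/
def Svec {s : ℕ} (α : Fin s) (W : Fin s → ℝ) : Fin s → ℝ := fun i => max (W α) (W i)

/-- A vector is ordered if its coordinates are nondecreasing and nonnegative. -/
def IsOrdered {s : ℕ} (W : Fin s → ℝ) : Prop := Monotone W ∧ ∀ i, 0 ≤ W i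

/-- The one-step MJSRE map `Φ_{α,σ,τ}(W) = R(S(α,W) + σ·L(α) − τ·U)⁺`. -/
noncomputable def Phi {s : ℕ} (α : Fin s) (σ τ : ℝ) (W : Fin s → ℝ) : Fin s → ℝ :=
  sortVec (fun i => max (Svec α W i + σ * Lvec α i - τ * Uvec s i) 0)


open Classical in
lemma card_sort_le {n : ℕ} (v : Fin n → ℝ) (a : ℝ) :
    Fintype.card {i // v (Tuple.sort v i) ≤ a} = Fintype.card {i // v i ≤ a} :=
  Fintype.card_congr (Equiv.subtypeEquiv (Tuple.sort v) (fun i => Iff.rfl))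

open Classical in
lemma sort_le_shift {n : ℕ} (v w : Fin n → ℝ) (c : ℝ) (h : ∀ i, v i ≤ w i + c)
    (j : Fin n) : (v ∘ Tuple.sort v) j ≤ (w ∘ Tuple.sort w) j + c := by
  set a : ℝ := (w ∘ Tuple.sort w) j + c with ha
  have hmw : Monotone (w ∘ Tuple.sort w) := Tuple.monotone_sort w
  have hmv : Monotone (v ∘ Tuple.sort v) := Tuple.monotone_sort v
  have h1 : (j : Fin n) < Fintype.card {i // (w ∘ Tuple.sort w) i ≤ (w ∘ Tuple.sort w) j} :=
    by rw [Fintype.card_subtype]; exact (Tuple.lt_card_le_iff_apply_le_of_monotone hmw).2 le_rfl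
  have hsub : Fintype.card {i // (w ∘ Tuple.sort w) i ≤ (w ∘ Tuple.sort w) j}
      ≤ Fintype.card {i // (v ∘ Tuple.sort v) i ≤ a} := by
    simp only [Function.comp_apply]
    rw [card_sort_le, card_sort_le]
    apply Fintype.card_subtype_mono
    intro i hi
    exact (h i).trans (by simpa [ha] using add_le_add_right hi c)
  exact (Tuple.lt_card_le_iff_apply_le_of_monotone hmv).1
    (by rw [← Fintype.card_subtype]; exact lt_of_lt_of_le h1 hsub)

/-- Sub-homogeneity of the one-step MJSRE map: for every `α ∈ {1,…,s}`, `σ, τ ≥ 0`,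
ordered `W` and constant `c ≥ 0`, one has `Φ_{α,σ,τ}(W + c·U) ≤ Φ_{α,σ,τ}(W) + c·U`
coordinatewise. -/
theorem Phi_subhomogeneous (s : ℕ) (hs : 1 ≤ s) (α : Fin s) (σ τ : ℝ)
    (hσ : 0 ≤ σ) (hτ : 0 ≤ τ) (W : Fin s → ℝ) (hW : IsOrdered W)
    (c : ℝ) (hc : 0 ≤ c) :
    ∀ i, Phi α σ τ (W + c • Uvec s) i ≤ Phi α σ τ W i + c * Uvec s i := by
  intro i
  have key : ∀ j, max (Svec α (W + c • Uvec s) j + σ * Lvec α j - τ * Uvec s j) 0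
      ≤ max (Svec α W j + σ * Lvec α j - τ * Uvec s j) 0 + c := by
    intro j
    have hS : Svec α (W + c • Uvec s) j = Svec α W j + c := by
      simp [Svec, Uvec, Pi.add_apply, max_add_add_right]
    rw [hS]
    have : Svec α W j + c + σ * Lvec α j - τ * Uvec s j
        = (Svec α W j + σ * Lvec α j - τ * Uvec s j) + c := by ring
    rw [this]
    calc max ((Svec α W j + σ * Lvec α j - τ * Uvec s j) + c) 0
        ≤ max ((Svec α W j + σ * Lvec α j - τ * Uvec s j) + c) (0 + c) :=
          max_le_max le_rfl (by linarith)
      _ = max (Svec α W j + σ * Lvec α j - τ * Uvec s j) 0 + c := by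
          rw [max_add_add_right]
  simpa [Phi, sortVec, Uvec] using sort_le_shift
    (fun j => max (Svec α (W + c • Uvec s) j + σ * Lvec α j - τ * Uvec s j) 0)
    (fun j => max (Svec α W j + σ * Lvec α j - τ * Uvec s j) 0) c key i
end

section
/- For any bi-infinite job data ξ_k = (α_k, σ_k, τ_k), k ∈ ℤ, with 1 ≤ α_k ≤ s, σ_k ≥ 0, τ_k ≥ 0, the Loynes sequence is monotonically nondecreasing: for every n ≥ 0, M_n(ξ) ≤ M_{n+1}(ξ) coordinatewise. -/
/-- One-step MJSRE map packaged on job data `(α, σ, τ)`. -/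
noncomputable def PhiD {s : ℕ} (p : Fin s × ℝ × ℝ) : (Fin s → ℝ) → (Fin s → ℝ) :=
  Phi p.1 p.2.1 p.2.2

/-- The Loynes sequence associated with bi-infinite job data `ξ : ℤ → Fin s × ℝ × ℝ`:
`M 0 = 0` and `M (n+1)` is obtained by applying the one-step maps with data
`ξ (-(n+1)), …, ξ (-1)` in chronological order starting from the zero vector. -/
noncomputable def Loynes {s : ℕ} : (ℤ → Fin s × ℝ × ℝ) → ℕ → (Fin s → ℝ)
  | _, 0 => 0
  | ξ, n + 1 => PhiD (ξ (-1)) (Loynes (fun k => ξ (k - 1)) n)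


lemma sortVec_mono {s : ℕ} {v w : Fin s → ℝ} (h : ∀ j, v j ≤ w j) (i : Fin s) :
    sortVec v i ≤ sortVec w i := by
  unfold sortVec
  set σ := Tuple.sort v
  set τ := Tuple.sort w
  have hA : ∃ k, k ∈ (Finset.Ici i).image σ ∩ (Finset.Iic i).image τ := by
    by_contra hc
    push_neg at hc
    have hdisj : Disjoint ((Finset.Ici i).image σ) ((Finset.Iic i).image τ) := by
      rw [Finset.disjoint_left]
      intro k hk hk'
      exact hc k (Finset.mem_inter.mpr ⟨hk, hk'⟩)
    have hcard : ((Finset.Ici i).image σ ∪ (Finset.Iic i).image τ).card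
        = (Finset.Ici i).card + (Finset.Iic i).card := by
      rw [Finset.card_union_of_disjoint hdisj,
        Finset.card_image_of_injective _ σ.injective,
        Finset.card_image_of_injective _ τ.injective]
    have h1 : (Finset.Ici i).card + (Finset.Iic i).card = s + 1 := by
      have := Finset.card_union_add_card_inter (Finset.Ici i) (Finset.Iic i)
      have hu : Finset.Ici i ∪ Finset.Iic i = Finset.univ := by
        ext j; simp [le_total i j]
      have hi : Finset.Ici i ∩ Finset.Iic i = {i} := by
        ext j; simp [le_antisymm_iff, and_comm]
      rw [hu, hi] at this
      simpa using this.symm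
    have h2 := Finset.card_le_univ ((Finset.Ici i).image σ ∪ (Finset.Iic i).image τ)
    rw [hcard, h1] at h2
    simp at h2
  obtain ⟨k, hk⟩ := hA
  rw [Finset.mem_inter, Finset.mem_image, Finset.mem_image] at hk
  obtain ⟨⟨a, ha, hak⟩, ⟨b, hb, hbk⟩⟩ := hk
  calc v (σ i) ≤ v (σ a) := Tuple.monotone_sort v (Finset.mem_Ici.mp ha)
    _ = v k := by rw [hak]
    _ ≤ w k := h k
    _ = w (τ b) := by rw [hbk]
    _ ≤ w (τ i) := Tuple.monotone_sort w (Finset.mem_Iic.mp hb)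

lemma Phi_nonneg {s : ℕ} (α : Fin s) (σ τ : ℝ) (W : Fin s → ℝ) (i : Fin s) :
    0 ≤ Phi α σ τ W i := by
  unfold Phi sortVec
  exact le_max_right _ _

lemma Phi_mono {s : ℕ} (α : Fin s) (σ τ : ℝ) {W W' : Fin s → ℝ}
    (h : ∀ j, W j ≤ W' j) (i : Fin s) : Phi α σ τ W i ≤ Phi α σ τ W' i := by
  unfold Phi
  apply sortVec_mono
  intro j
  apply max_le_max _ le_rfl
  have : Svec α W j ≤ Svec α W' j := max_le_max (h α) (h j)
  linarith

theorem Loynes_mono' (s : ℕ) :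
    ∀ n : ℕ, ∀ ξ : ℤ → Fin s × ℝ × ℝ, ∀ i, Loynes ξ n i ≤ Loynes ξ (n + 1) i := by
  intro n
  induction n with
  | zero =>
    intro ξ i
    show (0 : ℝ) ≤ PhiD (ξ (-1)) _ i
    exact Phi_nonneg _ _ _ _ i
  | succ n ih =>
    intro ξ i
    show PhiD (ξ (-1)) (Loynes (fun k => ξ (k - 1)) n) i
      ≤ PhiD (ξ (-1)) (Loynes (fun k => ξ (k - 1)) (n + 1)) i
    exact Phi_mono _ _ _ (fun j => ih (fun k => ξ (k - 1)) j) i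

/-- Monotonicity of the Loynes sequence. -/
theorem Loynes_mono (s : ℕ) (hs : 1 ≤ s) (ξ : ℤ → Fin s × ℝ × ℝ)
    (hσ : ∀ k, 0 ≤ (ξ k).2.1) (hτ : ∀ k, 0 ≤ (ξ k).2.2) :
    ∀ n : ℕ, ∀ i, Loynes ξ n i ≤ Loynes ξ (n + 1) i := by
  intro n i
  exact Loynes_mono' s n ξ i
end

section
/- For every fixed α ∈ {1,…,s} and σ, τ ≥ 0, the one-step MJSRE map Φ_{α,σ,τ} is continuous on ℝ^s. Consequently, for bi-infinite job data ξ, if the Loynes sequence M_n(ξ) converges coordinatewise to a finite vector M_∞(ξ), then the Loynes sequence M_n(θξ) for the shifted data θξ (where (θξ)_k = ξ_{k+1}) also converges coordinatewise, and its limit equals Φ_{α_0,σ_0,τ_0}(M_∞(ξ)); i.e., the limit satisfies the stochastic recurrence equation. -/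
open Filter Topology

section aux
variable {s : ℕ}

lemma sortVec_mono_s5 (v : Fin s → ℝ) : Monotone (sortVec v) := Tuple.monotone_sort v

/-- The family of (k+1)-subsets is nonempty. -/
lemma powCard_ne (k : Fin s) :
    (Finset.powersetCard ((k : ℕ) + 1) (Finset.univ : Finset (Fin s))).Nonempty := by
  rw [Finset.powersetCard_nonempty, Finset.card_univ, Fintype.card_fin]
  exact k.2

lemma mem_powCard_nonempty {k : Fin s} {A : Finset (Fin s)}
    (hA : A ∈ Finset.powersetCard ((k : ℕ) + 1) (Finset.univ : Finset (Fin s))) :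
    A.Nonempty := by
  rw [Finset.mem_powersetCard] at hA
  exact Finset.card_pos.mp (hA.2 ▸ Nat.succ_pos _)

/-- Order-statistic formula: the k-th smallest entry is the min over (k+1)-subsets
of the max. -/
lemma sortVec_eq_inf_sup (v : Fin s → ℝ) (k : Fin s) :
    sortVec v k = (Finset.powersetCard ((k : ℕ) + 1)
        (Finset.univ : Finset (Fin s))).attach.inf'
      ((powCard_ne k).attach)
      (fun A => A.1.sup' (mem_powCard_nonempty A.2) v) := by
  have hmono := sortVec_mono_s5 v
  apply le_antisymm
  · -- lower bound: sortVec v k ≤ sup over any subset, by pigeonhole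
    apply Finset.le_inf'
    rintro ⟨A, hA⟩ -
    set e := Tuple.sort v with he
    have hAcard : A.card = (k : ℕ) + 1 := (Finset.mem_powersetCard.mp hA).2
    set B := A.image e.symm with hB
    have hBcard : B.card = (k : ℕ) + 1 := by
      rw [hB, Finset.card_image_of_injective _ e.symm.injective, hAcard]
    have : ∃ j ∈ B, k ≤ j := by
      by_contra h
      push_neg at h
      have hsub : B ⊆ Finset.Iio k := fun j hj => Finset.mem_Iio.mpr (h j hj)
      have := Finset.card_le_card hsub
      rw [hBcard, Fin.card_Iio] at this
      omega
    obtain ⟨j, hjB, hkj⟩ := this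
    have h1 : sortVec v k ≤ sortVec v j := hmono hkj
    have h2 : sortVec v j = v (e j) := rfl
    obtain ⟨a, haA, hae⟩ := Finset.mem_image.mp hjB
    have h3 : e j = a := by rw [← hae]; simp
    calc sortVec v k ≤ v (e j) := h1.trans_eq h2
      _ = v a := by rw [h3]
      _ ≤ A.sup' (mem_powCard_nonempty hA) v := Finset.le_sup' v haA
  · -- upper bound: the subset (Iic k).image e achieves sortVec v k
    set e := Tuple.sort v with he
    have hcard : ((Finset.Iic k).image e).card = (k : ℕ) + 1 := by
      rw [Finset.card_image_of_injective _ e.injective, Fin.card_Iic]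
    have hmem : (Finset.Iic k).image e ∈
        Finset.powersetCard ((k : ℕ) + 1) (Finset.univ : Finset (Fin s)) := by
      rw [Finset.mem_powersetCard]
      exact ⟨Finset.subset_univ _, hcard⟩
    refine (Finset.inf'_le _ (Finset.mem_attach _ ⟨_, hmem⟩)).trans ?_
    apply Finset.sup'_le
    intro a ha
    obtain ⟨i, hi, rfl⟩ := Finset.mem_image.mp ha
    exact hmono (Finset.mem_Iic.mp hi)

lemma continuous_sortVec :
    Continuous (fun v : Fin s → ℝ => sortVec v) := by
  apply continuous_pi
  intro k
  have : (fun v : Fin s → ℝ => sortVec v k) =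
      fun v => (Finset.powersetCard ((k : ℕ) + 1)
        (Finset.univ : Finset (Fin s))).attach.inf'
      ((powCard_ne k).attach)
      (fun A => A.1.sup' (mem_powCard_nonempty A.2) v) := by
    funext v; exact sortVec_eq_inf_sup v k
  rw [this]
  apply Continuous.finset_inf'_apply
  intro A _
  apply Continuous.finset_sup'_apply
  intro i _
  exact continuous_apply i

lemma continuous_Phi (α : Fin s) (σ τ : ℝ) : Continuous (Phi α σ τ) := by
  unfold Phi
  have hg : Continuous (fun W : Fin s → ℝ =>
      fun i => max (Svec α W i + σ * Lvec α i - τ * Uvec s i) 0) := by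
    apply continuous_pi
    intro i
    exact ((((continuous_apply α).max (continuous_apply i)).add continuous_const).sub
      continuous_const).max continuous_const
  exact continuous_sortVec.comp hg

lemma Loynes_shift (ξ : ℤ → Fin s × ℝ × ℝ) (n : ℕ) :
    Loynes (fun k => ξ (k + 1)) (n + 1) = PhiD (ξ 0) (Loynes ξ n) := by
  show PhiD (ξ (-1 + 1)) (Loynes (fun k => ξ (k - 1 + 1)) n) = _
  have h1 : (-1 : ℤ) + 1 = 0 := by ring
  have h2 : (fun k : ℤ => ξ (k - 1 + 1)) = ξ := by funext k; congr 1; ring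
  rw [h1, h2]

end aux

/-- Continuity of the one-step MJSRE map, and its consequence for limits of Loynes
sequences: if the Loynes sequence for data `ξ` converges coordinatewise to a finite vector
`M∞`, then the Loynes sequence for the shifted data `θξ` converges coordinatewise to
`Φ_{ξ₀}(M∞)`, i.e. the limit satisfies the stochastic recurrence equation. -/
theorem Phi_continuous_and_sre_limit (s : ℕ) (hs : 1 ≤ s) :
    (∀ (α : Fin s) (σ τ : ℝ), 0 ≤ σ → 0 ≤ τ → Continuous (Phi α σ τ)) ∧
    ∀ (ξ : ℤ → Fin s × ℝ × ℝ), (∀ k, 0 ≤ (ξ k).2.1) → (∀ k, 0 ≤ (ξ k).2.2) →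
      ∀ Minf : Fin s → ℝ,
        (∀ i, Tendsto (fun n : ℕ => Loynes ξ n i) atTop (𝓝 (Minf i))) →
        ∀ i, Tendsto (fun n : ℕ => Loynes (fun k => ξ (k + 1)) n i) atTop
          (𝓝 (PhiD (ξ 0) Minf i)) := by
  constructor
  · exact fun α σ τ _ _ => continuous_Phi α σ τ
  · intro ξ _ _ Minf hM i
    have h1 : Tendsto (fun n : ℕ => Loynes ξ n) atTop (𝓝 Minf) :=
      tendsto_pi_nhds.mpr hM
    have h2 : Tendsto (fun n : ℕ => PhiD (ξ 0) (Loynes ξ n) i) atTop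
        (𝓝 (PhiD (ξ 0) Minf i)) :=
      (((continuous_apply i).comp (continuous_Phi (ξ 0).1 (ξ 0).2.1 (ξ 0).2.2)).tendsto
        Minf).comp h1
    have h3 : Tendsto (fun n : ℕ => Loynes (fun k => ξ (k + 1)) (n + 1) i) atTop
        (𝓝 (PhiD (ξ 0) Minf i)) := by
      simpa only [Loynes_shift] using h2
    exact (tendsto_add_atTop_iff_nat 1).mp h3
end

section
/- (Causality and homogeneity of the multiserver-job queuing system.) Given nondecreasing arrival epochs (T_k)_{m ≤ k ≤ n} and jobs (α_k, σ_k) with 1 ≤ α_k ≤ s and σ_k ≥ 0, the last activity time satisfies X_{[m,n]} ≥ T_n (causality). Moreover, for every c ∈ ℝ, replacing each arrival epoch T_k by T_k + c leaves all workload vectors W_{[m,k]} unchanged and translates the last activity time: X_{[m,n]}(c + T) = X_{[m,n]}(T) + c (homogeneity). -/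
/-- Workload vectors of the multiserver-job system fed by arrival epochs `T` and jobs
`(a k, σf k)` for indices starting at `m`: `Wseq T a σf m j` is the workload vector
`W_{[m, m+j]}`, i.e. `W_{[m,m]} = 0` and
`W_{[m,k+1]} = Φ_{α_k, σ_k, T_{k+1} − T_k}(W_{[m,k]})`. -/
noncomputable def Wseq {s : ℕ} (T : ℤ → ℝ) (a : ℤ → Fin s) (σf : ℤ → ℝ) (m : ℤ) :
    ℕ → (Fin s → ℝ)
  | 0 => 0
  | j + 1 => Phi (a (m + j)) (σf (m + j)) (T (m + j + 1) - T (m + j)) (Wseq T a σf m j)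

/-- The last activity time `X_{[m,n]} = T_n + max (W_{[m,n]}^{α_n} + σ_n, W_{[m,n]}^s)`. -/
noncomputable def Xlast {s : ℕ} (hs : 0 < s) (T : ℤ → ℝ) (a : ℤ → Fin s) (σf : ℤ → ℝ)
    (m n : ℤ) : ℝ :=
  T n + max (Wseq T a σf m (n - m).toNat (a n) + σf n)
      (Wseq T a σf m (n - m).toNat ⟨s - 1, by omega⟩)


lemma Wseq_nonneg {s : ℕ} (T : ℤ → ℝ) (a : ℤ → Fin s) (σf : ℤ → ℝ) (m : ℤ) :
    ∀ j i, 0 ≤ Wseq T a σf m j i := by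
  intro j
  cases j with
  | zero => intro i; simp [Wseq]
  | succ j =>
    intro i
    show (0:ℝ) ≤ Phi _ _ _ _ i
    unfold Phi sortVec
    exact le_max_right _ _

lemma Wseq_shift {s : ℕ} (T : ℤ → ℝ) (a : ℤ → Fin s) (σf : ℤ → ℝ) (c : ℝ) (m : ℤ) :
    ∀ j : ℕ, Wseq (fun k => T k + c) a σf m j = Wseq T a σf m j := by
  intro j
  induction j with
  | zero => rfl
  | succ j ih =>
    show Phi _ _ _ _ = Phi _ _ _ _
    rw [ih]
    ring_nf

/-- Causality and homogeneity of the multiserver-job queuing system: the last activity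
time satisfies `X_{[m,n]} ≥ T_n`; and translating all arrival epochs by a constant `c`
leaves all workload vectors unchanged and translates the last activity time by `c`. -/
theorem mjqm_causality_homogeneity (s : ℕ) (hs : 0 < s)
    (T : ℤ → ℝ) (hT : Monotone T) (a : ℤ → Fin s) (σf : ℤ → ℝ) (hσ : ∀ k, 0 ≤ σf k) :
    (∀ m n : ℤ, m ≤ n → T n ≤ Xlast hs T a σf m n) ∧
    (∀ c : ℝ, ∀ m : ℤ, ∀ j : ℕ, Wseq (fun k => T k + c) a σf m j = Wseq T a σf m j) ∧
    (∀ c : ℝ, ∀ m n : ℤ, m ≤ n →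
      Xlast hs (fun k => T k + c) a σf m n = Xlast hs T a σf m n + c) := by
  have hshift := Wseq_shift T a σf
  refine ⟨?_, fun c m j => hshift c m j, ?_⟩
  · intro m n hmn
    unfold Xlast
    have h1 : 0 ≤ Wseq T a σf m (n - m).toNat (a n) + σf n :=
      add_nonneg (Wseq_nonneg T a σf m _ _) (hσ n)
    linarith [le_max_left (Wseq T a σf m (n - m).toNat (a n) + σf n)
      (Wseq T a σf m (n - m).toNat ⟨s - 1, by omega⟩)]
  · intro c m n hmn
    unfold Xlast
    rw [hshift]
    ring
end

section
/- (External monotonicity of the multiserver-job queuing system.) Let (T_k) and (T'_k) be two nondecreasing sequences of arrival epochs with T_k ≤ T'_k for all k, and let (α_k, σ_k) be a common sequence of jobs with 1 ≤ α_k ≤ s and σ_k ≥ 0. Then for all m ≤ n, the workload vectors satisfy W_{[m,n]}(T) ≤ W_{[m,n]}(T') + (T'_n − T_n)·U coordinatewise, and consequently the last activity times satisfy X_{[m,n]}(T) ≤ X_{[m,n]}(T'). -/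
/-- Monotonicity of order statistics with a shift: if `v ≤ w + c` pointwise, then
`sortVec v ≤ sortVec w + c` pointwise. -/
lemma sortVec_le_shift {s : ℕ} {v w : Fin s → ℝ} {c : ℝ}
    (h : ∀ i, v i ≤ w i + c) : ∀ k, sortVec v k ≤ sortVec w k + c := by
  intro k
  by_contra hlt
  push_neg at hlt
  have hmaps : ∀ j ∈ Finset.Iic k,
      (Tuple.sort v).symm (Tuple.sort w j) ∈ Finset.Iio k := by
    intro j hj
    simp only [Finset.mem_Iic] at hj
    simp only [Finset.mem_Iio]
    by_contra hge
    push_neg at hge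
    have h1 : sortVec v k ≤ v (Tuple.sort w j) := by
      have := Tuple.monotone_sort v hge
      simpa [sortVec, Function.comp] using this
    have h2 : w (Tuple.sort w j) ≤ sortVec w k := by
      have := Tuple.monotone_sort w hj
      simpa [sortVec, Function.comp] using this
    have := h (Tuple.sort w j)
    linarith
  have hinj : Set.InjOn (fun j => (Tuple.sort v).symm (Tuple.sort w j))
      (Finset.Iic k) := by
    intro x _ y _ hxy
    simpa using hxy
  have hcard := Finset.card_le_card_of_injOn _ hmaps hinj
  rw [Fin.card_Iic, Fin.card_Iio] at hcard
  omega

/-- One-step comparison: if `W ≤ W' + c` pointwise and `c + τ' - τ ≥ 0`, then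
`Φ_{α,σ,τ}(W) ≤ Φ_{α,σ,τ'}(W') + (c + τ' - τ)` pointwise. -/
lemma Phi_le_shift {s : ℕ} (α : Fin s) (σ τ τ' c : ℝ) {W W' : Fin s → ℝ}
    (h : ∀ i, W i ≤ W' i + c) (hc' : 0 ≤ c + τ' - τ) :
    ∀ i, Phi α σ τ W i ≤ Phi α σ τ' W' i + (c + τ' - τ) := by
  apply sortVec_le_shift
  intro i
  have hS : Svec α W i ≤ Svec α W' i + c := by
    simp only [Svec]
    rcases le_total (W α) (W i) with hh | hh
    · calc max (W α) (W i) = W i := max_eq_right hh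
        _ ≤ W' i + c := h i
        _ ≤ max (W' α) (W' i) + c := by gcongr; exact le_max_right _ _
    · calc max (W α) (W i) = W α := max_eq_left hh
        _ ≤ W' α + c := h α
        _ ≤ max (W' α) (W' i) + c := by gcongr; exact le_max_left _ _
  have hx : Svec α W i + σ * Lvec α i - τ * Uvec s i
      ≤ (Svec α W' i + σ * Lvec α i - τ' * Uvec s i) + (c + τ' - τ) := by
    simp only [Uvec]; linarith
  rcases le_total (Svec α W i + σ * Lvec α i - τ * Uvec s i) 0 with hh | hh
  · rw [max_eq_right hh]
    have : (0:ℝ) ≤ max (Svec α W' i + σ * Lvec α i - τ' * Uvec s i) 0 :=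
      le_max_right _ _
    linarith
  · rw [max_eq_left hh]
    calc Svec α W i + σ * Lvec α i - τ * Uvec s i
        ≤ (Svec α W' i + σ * Lvec α i - τ' * Uvec s i) + (c + τ' - τ) := hx
      _ ≤ max (Svec α W' i + σ * Lvec α i - τ' * Uvec s i) 0 + (c + τ' - τ) := by
          gcongr; exact le_max_left _ _

/-- External monotonicity of the multiserver-job queuing system: if `T ≤ T'` pointwise
(for a common job sequence), then `W_{[m,n]}(T) ≤ W_{[m,n]}(T') + (T'_n − T_n)·U`
coordinatewise, and consequently `X_{[m,n]}(T) ≤ X_{[m,n]}(T')`. -/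
theorem mjqm_external_monotonicity (s : ℕ) (hs : 0 < s)
    (T T' : ℤ → ℝ) (hT : Monotone T) (hT' : Monotone T') (hle : ∀ k, T k ≤ T' k)
    (a : ℤ → Fin s) (σf : ℤ → ℝ) (hσ : ∀ k, 0 ≤ σf k) :
    ∀ m n : ℤ, m ≤ n →
      (∀ i, Wseq T a σf m (n - m).toNat i
          ≤ Wseq T' a σf m (n - m).toNat i + (T' n - T n) * Uvec s i) ∧
      Xlast hs T a σf m n ≤ Xlast hs T' a σf m n := by
  intro m n hmn
  have key : ∀ j : ℕ, ∀ i, Wseq T a σf m j i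
      ≤ Wseq T' a σf m j i + (T' (m + j) - T (m + j)) := by
    intro j
    induction j with
    | zero =>
      intro i
      simp only [Wseq, Pi.zero_apply, Nat.cast_zero, add_zero]
      have := hle m
      linarith
    | succ j ih =>
      have hstep := Phi_le_shift (a (m + j)) (σf (m + j))
        (T (m + j + 1) - T (m + j)) (T' (m + j + 1) - T' (m + j))
        (T' (m + j) - T (m + j)) ih (by have := hle (m + j + 1); linarith)
      intro i
      have := hstep i
      simp only [Wseq]
      push_cast
      have harg : (T' (m + j) - T (m + j)) + (T' (m + j + 1) - T' (m + j))
          - (T (m + j + 1) - T (m + j)) = T' (m + j + 1) - T (m + j + 1) := by ring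
      rw [harg] at this
      convert this using 3 <;> push_cast <;> ring
  have hj : (m + ((n - m).toNat : ℤ)) = n := by omega
  have keyn : ∀ i, Wseq T a σf m (n - m).toNat i
      ≤ Wseq T' a σf m (n - m).toNat i + (T' n - T n) := by
    intro i
    have := key (n - m).toNat i
    rwa [hj] at this
  constructor
  · intro i
    have := keyn i
    simp only [Uvec, mul_one]
    linarith
  · unfold Xlast
    have h1 := keyn (a n)
    have h2 := keyn ⟨s - 1, by omega⟩
    have := hle n
    rcases le_total (Wseq T a σf m (n - m).toNat (a n) + σf n)
        (Wseq T a σf m (n - m).toNat ⟨s - 1, by omega⟩) with hh | hh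
    · rw [max_eq_right hh]
      have : Wseq T' a σf m (n - m).toNat ⟨s - 1, by omega⟩
          ≤ max (Wseq T' a σf m (n - m).toNat (a n) + σf n)
            (Wseq T' a σf m (n - m).toNat ⟨s - 1, by omega⟩) := le_max_right _ _
      linarith
    · rw [max_eq_left hh]
      have : Wseq T' a σf m (n - m).toNat (a n) + σf n
          ≤ max (Wseq T' a σf m (n - m).toNat (a n) + σf n)
            (Wseq T' a σf m (n - m).toNat ⟨s - 1, by omega⟩) := le_max_left _ _
      linarith
end

section
/- (Separability of the multiserver-job queuing system.) Let (T_k) be a nondecreasing sequence of arrival epochs and (α_k, σ_k) jobs with 1 ≤ α_k ≤ s and σ_k ≥ 0. If m ≤ l < n and X_{[m,l]} ≤ T_{l+1}, then W_{[m,l+1]} = 0, hence W_{[m,n]} = W_{[l+1,n]} and X_{[m,n]} = X_{[l+1,n]}. -/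
lemma wseq_monotone {s : ℕ} (T : ℤ → ℝ) (a : ℤ → Fin s) (σf : ℤ → ℝ) (m : ℤ) (j : ℕ) :
    Monotone (Wseq T a σf m j) := by
  cases j with
  | zero => exact monotone_const
  | succ j =>
    show Monotone (Phi _ _ _ _)
    unfold Phi sortVec
    exact Tuple.monotone_sort _

lemma phi_eq_zero {s : ℕ} (hs : 0 < s) (α : Fin s) (σ τ : ℝ) (W : Fin s → ℝ)
    (hmono : Monotone W) (h1 : W α + σ ≤ τ) (h2 : W ⟨s - 1, by omega⟩ ≤ τ) :
    Phi α σ τ W = 0 := by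
  have key : ∀ j : Fin s, max (Svec α W j + σ * Lvec α j - τ * Uvec s j) 0 = 0 := by
    intro j
    have hjtop : W j ≤ W ⟨s - 1, by omega⟩ := hmono (by simp [Fin.le_def]; omega)
    have hatop : W α ≤ W ⟨s - 1, by omega⟩ := hmono (by simp [Fin.le_def]; omega)
    by_cases hj : j ≤ α
    · have hS : Svec α W j = W α := max_eq_left (hmono hj)
      simp only [hS, Lvec, Uvec, if_pos hj]
      rw [max_eq_right]; linarith
    · simp only [Svec, Lvec, Uvec, if_neg hj]
      rw [max_eq_right]
      have := max_le hatop hjtop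
      linarith
  funext i
  simp [Phi, sortVec, Function.comp, key]

lemma wseq_shift {s : ℕ} (T : ℤ → ℝ) (a : ℤ → Fin s) (σf : ℤ → ℝ) (m : ℤ) (j0 : ℕ)
    (h0 : Wseq T a σf m j0 = 0) :
    ∀ k, Wseq T a σf m (j0 + k) = Wseq T a σf (m + j0) k := by
  intro k
  induction k with
  | zero => simpa [Wseq] using h0
  | succ k ih =>
    show Wseq T a σf m (j0 + k + 1) = Wseq T a σf (m + j0) (k + 1)
    have hc : (m : ℤ) + ((j0 + k : ℕ) : ℤ) = (m + (j0 : ℤ)) + (k : ℤ) := by push_cast; ring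
    rw [Wseq, Wseq, ih, hc]

/-- Separability of the multiserver-job queuing system: if `m ≤ l < n` and
`X_{[m,l]} ≤ T_{l+1}`, then `W_{[m,l+1]} = 0`, hence `W_{[m,n]} = W_{[l+1,n]}` and
`X_{[m,n]} = X_{[l+1,n]}`. -/
theorem mjqm_separability (s : ℕ) (hs : 0 < s)
    (T : ℤ → ℝ) (hT : Monotone T) (a : ℤ → Fin s) (σf : ℤ → ℝ) (hσ : ∀ k, 0 ≤ σf k)
    (m l n : ℤ) (hml : m ≤ l) (hln : l < n)
    (hX : Xlast hs T a σf m l ≤ T (l + 1)) :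
    Wseq T a σf m (l + 1 - m).toNat = 0 ∧
    Wseq T a σf m (n - m).toNat = Wseq T a σf (l + 1) (n - (l + 1)).toNat ∧
    Xlast hs T a σf m n = Xlast hs T a σf (l + 1) n := by
  set jl : ℕ := (l - m).toNat with hjl_def
  have hjl : (m : ℤ) + (jl : ℤ) = l := by omega
  set W := Wseq T a σf m jl with hW_def
  have hmono : Monotone W := wseq_monotone T a σf m jl
  unfold Xlast at hX
  rw [show (l - m).toNat = jl from rfl] at hX
  have h1 : W (a l) + σf l ≤ T (l + 1) - T l := by
    have := le_trans (le_max_left _ _) (by linarith [hX] : max (W (a l) + σf l) (W ⟨s - 1, by omega⟩) ≤ T (l + 1) - T l)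
    linarith
  have h2 : W ⟨s - 1, by omega⟩ ≤ T (l + 1) - T l := by
    have := le_max_right (W (a l) + σf l) (W ⟨s - 1, by omega⟩)
    linarith
  have hzero : Wseq T a σf m (jl + 1) = 0 := by
    rw [Wseq, hjl]
    exact phi_eq_zero hs _ _ _ _ hmono h1 h2
  have hj0 : (l + 1 - m).toNat = jl + 1 := by omega
  refine ⟨by rw [hj0]; exact hzero, ?_, ?_⟩
  · have hn : (n - m).toNat = (jl + 1) + (n - (l + 1)).toNat := by omega
    rw [hn, wseq_shift T a σf m (jl + 1) hzero,
      show (m : ℤ) + ((jl + 1 : ℕ) : ℤ) = l + 1 by push_cast; omega]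
  · have hn : (n - m).toNat = (jl + 1) + (n - (l + 1)).toNat := by omega
    unfold Xlast
    rw [hn, wseq_shift T a σf m (jl + 1) hzero,
      show (m : ℤ) + ((jl + 1 : ℕ) : ℤ) = l + 1 by push_cast; omega]
end
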